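/- For any permutations π₁, π₂ of {1,...,d}, defect(π₁) + defect(π₂⁻¹γ) ≤ 2·genus(π₁, π₁⁻¹π₂, π₂⁻¹γ), where γ = (1 2 ... d). -/

import Mathlib

open Equiv Equiv.Perm Finset

theorem Equiv.Perm.inv_apply_self {α : Type*} (f : Equiv.Perm α) (x : α) : f⁻¹ (f x) = x :=
  Equiv.symm_apply_apply f x

theorem Equiv.Perm.apply_inv_self {α : Type*} (f : Equiv.Perm α) (x : α) : f (f⁻¹ x) = x :=
  Equiv.apply_symm_apply f x

/-- The number of antiexceedances of a permutation: indices `i` with `π i ≤ i`. -/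
def aex {d : ℕ} (π : Equiv.Perm (Fin d)) : ℕ :=
  (Finset.univ.filter (fun i => π i ≤ i)).card

/-- The number of cycles of a permutation, counting fixed points. -/
def cyc {d : ℕ} (π : Equiv.Perm (Fin d)) : ℕ :=
  π.cycleType.card + (d - π.support.card)

/-- The word length of `π` with respect to all transpositions: `d - cyc π`. -/
def len {d : ℕ} (π : Equiv.Perm (Fin d)) : ℕ := d - cyc π

-- card of cycleType = card of cycleFactorsFinset
lemma card_cycleType_eq {d : ℕ} (σ : Equiv.Perm (Fin d)) :
    Multiset.card σ.cycleType = σ.cycleFactorsFinset.card := by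
  simp [Equiv.Perm.cycleType_def]

lemma cyc_le {d : ℕ} (σ : Equiv.Perm (Fin d)) : cyc σ ≤ d := by
  have h1 : Multiset.card σ.cycleType • 1 ≤ σ.cycleType.sum :=
    Multiset.card_nsmul_le_sum fun x hx =>
      le_trans (by norm_num) (Equiv.Perm.two_le_of_mem_cycleType hx)
  simp only [smul_eq_mul, mul_one] at h1
  rw [Equiv.Perm.sum_cycleType] at h1
  have h2 : σ.support.card ≤ d := by
    simpa using Finset.card_le_univ σ.support
  unfold cyc; omega

-- L1
lemma aex_swap_mul {d : ℕ} (σ : Equiv.Perm (Fin d)) (a b : Fin d) :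
    aex (Equiv.swap a b * σ) ≤ aex σ + 1 := by
  classical
  unfold aex
  wlog hab : a ≤ b generalizing a b
  · rw [Equiv.swap_comm]; exact this b a (le_of_not_ge hab)
  have hsub : (Finset.univ.filter (fun i => (Equiv.swap a b * σ) i ≤ i)) ⊆
      insert (σ⁻¹ b) (Finset.univ.filter (fun i => σ i ≤ i)) := by
    intro i hi
    rw [Finset.mem_filter] at hi
    simp only [Finset.mem_filter, Finset.mem_univ, true_and, Equiv.Perm.mul_apply] at hi
    by_cases hib : σ i = b
    · exact Finset.mem_insert.mpr (Or.inl (by rw [← hib, Equiv.Perm.inv_apply_self]))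
    · refine Finset.mem_insert.mpr (Or.inr ?_)
      simp only [Finset.mem_filter, Finset.mem_univ, true_and]
      by_cases hia : σ i = a
      · rw [hia, Equiv.swap_apply_left] at hi
        exact le_trans (hia ▸ hab) hi
      · rwa [Equiv.swap_apply_of_ne_of_ne hia hib] at hi
  exact le_trans (Finset.card_le_card hsub)
    (Finset.card_insert_le (σ⁻¹ b) (Finset.univ.filter (fun i => σ i ≤ i)))

-- L2: key lemma
lemma cyc_swap_mul {d : ℕ} (σ : Equiv.Perm (Fin d)) (x : Fin d) (hx : σ x ≠ x) :
    cyc (Equiv.swap x (σ x) * σ) = cyc σ + 1 := by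
  classical
  set c := σ.cycleOf x with hcdef
  have hcx : c x = σ x := Equiv.Perm.cycleOf_apply_self σ x
  have hmem : c ∈ σ.cycleFactorsFinset :=
    Equiv.Perm.cycleOf_mem_cycleFactorsFinset_iff.mpr (Equiv.Perm.mem_support.mpr hx)
  have hcyc : c.IsCycle := Equiv.Perm.isCycle_cycleOf σ hx
  set g := σ * c⁻¹ with hgdef
  have hdis : Equiv.Perm.Disjoint g c :=
    Equiv.Perm.disjoint_mul_inv_of_mem_cycleFactorsFinset hmem
  have hσ : σ = g * c := by rw [hgdef]; group
  have hσ' : σ = c * g := by rw [hσ, hdis.commute.eq]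
  have hfacσ : σ.cycleFactorsFinset.card = g.cycleFactorsFinset.card + 1 := by
    have h := Equiv.Perm.cycleFactorsFinset_mul_inv_mem_eq_sdiff hmem
    rw [← hgdef] at h
    rw [h, Finset.sdiff_singleton_eq_erase, Finset.card_erase_of_mem hmem]
    have : 1 ≤ σ.cycleFactorsFinset.card := Finset.card_pos.mpr ⟨c, hmem⟩
    omega
  have hsupσ : σ.support.card = g.support.card + c.support.card := by
    rw [hσ, hdis.support_mul, Finset.card_union_of_disjoint hdis.disjoint_support]
  have hsupd : σ.support.card ≤ d := by simpa using Finset.card_le_univ σ.support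
  by_cases h2 : σ (σ x) = x
  · -- c is the transposition (x, σ x); swap * σ = g
    have hccx : c (c x) = x := by
      rw [hcx, Equiv.Perm.cycleOf_apply_apply_self, h2]
    have hc2 : c = Equiv.swap x (c x) :=
      hcyc.eq_swap_of_apply_apply_eq_self (by rw [hcx]; exact hx) hccx
    have heq : Equiv.swap x (σ x) * σ = g := by
      rw [← hcx, ← hc2, hσ', ← mul_assoc]
      have : c * c = 1 := by
        rw [hc2]; exact Equiv.swap_mul_self _ _
      rw [this, one_mul]
    have hsc : c.support.card = 2 := by
      rw [hc2]
      exact Equiv.Perm.card_support_swap (by rw [hcx]; exact Ne.symm hx)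
    rw [heq]
    unfold cyc
    rw [card_cycleType_eq, card_cycleType_eq]
    omega
  · -- general case: the cycle c gets shortened
    have hccx : c (c x) ≠ x := by
      rw [hcx, Equiv.Perm.cycleOf_apply_apply_self]; exact h2
    have hcxne : c x ≠ x := by rw [hcx]; exact hx
    set c' := Equiv.swap x (c x) * c with hc'def
    have hc'cyc : c'.IsCycle := hcyc.swap_mul hcxne hccx
    have hsupc' : c'.support = c.support.erase x := by
      rw [Finset.erase_eq]; exact Equiv.Perm.support_swap_mul_eq c x hccx
    have heq : Equiv.swap x (σ x) * σ = c' * g := by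
      rw [← hcx, hσ', hc'def, mul_assoc]
    have hdis' : Equiv.Perm.Disjoint c' g := by
      rw [Equiv.Perm.disjoint_iff_disjoint_support] at hdis ⊢
      refine Finset.disjoint_of_subset_left ?_ hdis.symm
      rw [hsupc']; exact Finset.erase_subset _ _
    have hfac' : (c' * g).cycleFactorsFinset = insert c' g.cycleFactorsFinset := by
      rw [hdis'.cycleFactorsFinset_mul_eq_union,
        Equiv.Perm.cycleFactorsFinset_eq_singleton_self_iff.mpr hc'cyc]
      ext y; simp [or_comm]
    have hc'notmem : c' ∉ g.cycleFactorsFinset := by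
      intro hmem'
      have h1 : c'.support ⊆ g.support := Equiv.Perm.mem_cycleFactorsFinset_support_le hmem'
      obtain ⟨y, hy⟩ := hc'cyc.nonempty_support
      have h3 : y ∈ c.support := Finset.mem_of_mem_erase (hsupc' ▸ hy)
      have h4 : y ∈ g.support := h1 hy
      rw [Equiv.Perm.disjoint_iff_disjoint_support] at hdis
      exact Finset.disjoint_left.mp hdis h4 h3
    have hsupp' : (Equiv.swap x (σ x) * σ).support = σ.support.erase x := by
      rw [Finset.erase_eq]; exact Equiv.Perm.support_swap_mul_eq σ x h2
    have hxsup : x ∈ σ.support := Equiv.Perm.mem_support.mpr hx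
    have hcards : (Equiv.swap x (σ x) * σ).support.card = σ.support.card - 1 := by
      rw [hsupp', Finset.card_erase_of_mem hxsup]
    have hfc : (Equiv.swap x (σ x) * σ).cycleFactorsFinset.card = σ.cycleFactorsFinset.card := by
      rw [heq, hfac', Finset.card_insert_of_notMem hc'notmem]
      omega
    have hs1 : 1 ≤ σ.support.card := Finset.card_pos.mpr ⟨x, hxsup⟩
    unfold cyc
    rw [card_cycleType_eq, card_cycleType_eq, hfc, hcards]
    omega

lemma cyc_one {d : ℕ} : cyc (1 : Equiv.Perm (Fin d)) = d := by
  unfold cyc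
  simp [Equiv.Perm.cycleType_one]

-- L3
lemma aex_mul_le {d : ℕ} (ρ σ : Equiv.Perm (Fin d)) :
    aex (ρ * σ) ≤ aex σ + len ρ := by
  classical
  generalize hn : ρ.support.card = n
  induction n using Nat.strong_induction_on generalizing ρ with
  | _ n ih =>
    by_cases hρ : ρ = 1
    · subst hρ
      simp [len, cyc_one, one_mul]
    · obtain ⟨x, hx⟩ : ∃ x, ρ x ≠ x := by
        by_contra h
        push_neg at h
        exact hρ (Equiv.ext h)
      set ρ' := Equiv.swap x (ρ x) * ρ with hρ'def
      have hcard : ρ'.support.card < ρ.support.card :=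
        Equiv.Perm.card_support_swap_mul hx
      have hcyc' : cyc ρ' = cyc ρ + 1 := cyc_swap_mul ρ x hx
      have hlen : len ρ' + 1 = len ρ := by
        have h1 := cyc_le ρ'
        unfold len
        omega
      have hρeq : ρ = Equiv.swap x (ρ x) * ρ' := by
        rw [hρ'def, ← mul_assoc, Equiv.swap_mul_self, one_mul]
      have h3 := ih ρ'.support.card (hn ▸ hcard) ρ' rfl
      calc aex (ρ * σ) = aex (Equiv.swap x (ρ x) * (ρ' * σ)) := by
            rw [← mul_assoc, ← hρeq]
        _ ≤ aex (ρ' * σ) + 1 := aex_swap_mul _ _ _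
        _ ≤ aex σ + len ρ' + 1 := by omega
        _ = aex σ + len ρ := by omega

lemma aex_inv_rotate {m : ℕ} (σ : Equiv.Perm (Fin (m + 1))) :
    aex σ + aex (σ⁻¹ * finRotate (m + 1)) = m + 2 := by
  classical
  set γ := finRotate (m + 1) with hγ
  have hγapp : ∀ i : Fin (m + 1), γ i = i + 1 := fun i => finRotate_succ_apply i
  have key : aex (σ⁻¹ * γ) =
      (Finset.univ.filter (fun j : Fin (m + 1) => σ j = 0 ∨ (j : ℕ) < (σ j : ℕ))).card := by
    unfold aex
    apply Finset.card_nbij' (i := fun i => σ⁻¹ (γ i)) (j := fun j => γ⁻¹ (σ j))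
    · intro i hi
      rw [Finset.mem_coe, Finset.mem_filter] at hi
      simp only [Finset.mem_coe, Finset.mem_filter, Finset.mem_univ, true_and,
        Equiv.Perm.mul_apply] at hi ⊢
      rw [Equiv.Perm.apply_inv_self]
      by_cases h0 : γ i = 0
      · exact Or.inl h0
      · refine Or.inr ?_
        have hval : ((γ i : Fin (m+1)) : ℕ) = (i : ℕ) + 1 := by
          by_cases hl : i = Fin.last m
          · exfalso; apply h0; rw [hγapp i, hl]
            exact Fin.last_add_one m
          · rw [hγapp i, Fin.val_add_one, if_neg hl]
        have := Fin.le_def.mp hi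
        omega
    · intro j hj
      rw [Finset.mem_coe, Finset.mem_filter]
      simp only [Finset.mem_coe, Finset.mem_filter, Finset.mem_univ, true_and,
        Equiv.Perm.mul_apply] at hj ⊢
      rw [Equiv.Perm.apply_inv_self, Equiv.Perm.inv_apply_self]
      rcases hj with h0 | hlt
      · rw [h0]
        have h1 : γ⁻¹ (0 : Fin (m+1)) = Fin.last m := by
          rw [Equiv.Perm.inv_eq_iff_eq]
          rw [hγapp, Fin.last_add_one]
        rw [h1]
        exact Fin.le_last j
      · have hne : σ j ≠ 0 := by
          intro h; rw [h] at hlt; simp at hlt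
        have hsub : γ⁻¹ (σ j) = σ j - 1 := by
          rw [Equiv.Perm.inv_eq_iff_eq, hγapp, sub_add_cancel]
        rw [hsub, Fin.le_def, Fin.coe_sub_one, if_neg hne]
        omega
    · intro i _; simp
    · intro j _; simp
  rw [key]
  have hsplit : (Finset.univ.filter (fun j : Fin (m + 1) => σ j = 0 ∨ (j : ℕ) < (σ j : ℕ)))
      = (Finset.univ.filter (fun j : Fin (m + 1) => σ j = 0)) ∪
        (Finset.univ.filter (fun j : Fin (m + 1) => (j : ℕ) < (σ j : ℕ))) :=
    Finset.filter_or _ _ _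
  have hdisj : Disjoint (Finset.univ.filter (fun j : Fin (m + 1) => σ j = 0))
      (Finset.univ.filter (fun j : Fin (m + 1) => (j : ℕ) < (σ j : ℕ))) := by
    rw [Finset.disjoint_left]
    intro a ha hb
    simp only [Finset.mem_filter, Finset.mem_univ, true_and] at ha hb
    rw [ha] at hb
    simp at hb
  have hcard0 : (Finset.univ.filter (fun j : Fin (m + 1) => σ j = 0)).card = 1 := by
    have : (Finset.univ.filter (fun j : Fin (m + 1) => σ j = 0)) = {σ⁻¹ 0} := by
      ext j
      simp only [Finset.mem_filter, Finset.mem_univ, true_and, Finset.mem_singleton]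
      constructor
      · intro h; rw [← h, Equiv.Perm.inv_apply_self]
      · intro h; rw [h, Equiv.Perm.apply_inv_self]
    rw [this, Finset.card_singleton]
  have hcardlt : (Finset.univ.filter (fun j : Fin (m + 1) => (j : ℕ) < (σ j : ℕ))).card
      + aex σ = m + 1 := by
    have h1 := Finset.card_filter_add_card_filter_not
      (s := (Finset.univ : Finset (Fin (m + 1)))) (p := fun j => σ j ≤ j)
    have h2 : (Finset.univ.filter (fun j : Fin (m + 1) => ¬ σ j ≤ j))
        = (Finset.univ.filter (fun j : Fin (m + 1) => (j : ℕ) < (σ j : ℕ))) := by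
      apply Finset.filter_congr
      intro j _
      rw [not_le]
      exact Fin.lt_def
    rw [h2] at h1
    have : aex σ = (Finset.univ.filter (fun j : Fin (m + 1) => σ j ≤ j)).card := rfl
    simp only [Finset.card_univ, Fintype.card_fin] at h1
    omega
  rw [hsplit, Finset.card_union_of_disjoint hdisj, hcard0]
  omega

lemma card_cycleType_le_support {d : ℕ} (σ : Equiv.Perm (Fin d)) :
    Multiset.card σ.cycleType ≤ σ.support.card := by
  have h1 : Multiset.card σ.cycleType • 1 ≤ σ.cycleType.sum :=
    Multiset.card_nsmul_le_sum fun x hx =>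
      le_trans (by norm_num) (Equiv.Perm.two_le_of_mem_cycleType hx)
  simpa [Equiv.Perm.sum_cycleType] using h1

lemma support_le_d {d : ℕ} (σ : Equiv.Perm (Fin d)) : σ.support.card ≤ d := by
  simpa using Finset.card_le_univ σ.support

lemma len_eq {d : ℕ} (σ : Equiv.Perm (Fin d)) :
    len σ = σ.support.card - Multiset.card σ.cycleType := by
  have h1 := card_cycleType_le_support σ
  have h2 := support_le_d σ
  unfold len cyc
  omega

lemma len_inv {d : ℕ} (σ : Equiv.Perm (Fin d)) : len σ⁻¹ = len σ := by
  rw [len_eq, len_eq, Equiv.Perm.cycleType_inv, Equiv.Perm.support_inv]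

lemma sign_eq_pow_len {d : ℕ} (σ : Equiv.Perm (Fin d)) :
    Equiv.Perm.sign σ = (-1 : ℤˣ) ^ (len σ) := by
  rw [Equiv.Perm.sign_of_cycleType]
  have h1 := card_cycleType_le_support σ
  have h2 : σ.cycleType.sum = σ.support.card := Equiv.Perm.sum_cycleType σ
  have h3 : σ.cycleType.sum + Multiset.card σ.cycleType
      = len σ + 2 * Multiset.card σ.cycleType := by
    rw [len_eq, h2]; omega
  rw [h3, pow_add, pow_mul]
  norm_num

lemma neg_one_pow_mod (a b : ℕ) (h : (-1 : ℤˣ) ^ a = (-1 : ℤˣ) ^ b) : a % 2 = b % 2 := by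
  rcases Nat.even_or_odd a with ha | ha <;> rcases Nat.even_or_odd b with hb | hb
  · rw [Nat.even_iff] at ha hb; omega
  · rw [ha.neg_one_pow, hb.neg_one_pow] at h
    exact absurd h (by decide)
  · rw [ha.neg_one_pow, hb.neg_one_pow] at h
    exact absurd h (by decide)
  · rw [Nat.odd_iff] at ha hb; omega

lemma cyc_rotate {m : ℕ} : cyc (finRotate (m + 1)) = 1 := by
  match m with
  | 0 =>
    have : finRotate 1 = 1 := Subsingleton.elim _ _
    rw [this]
    simpa using cyc_one (d := 1)
  | Nat.succ k =>
    unfold cyc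
    rw [cycleType_finRotate, support_finRotate]
    simp

/-- The defect statistic `aex(π) - cyc(π)`. -/
def defect {d : ℕ} (π : Equiv.Perm (Fin d)) : ℤ := (aex π : ℤ) - cyc π

/-- The genus of a triple of permutations. -/
def genus {d : ℕ} (ρ₁ ρ₂ ρ₃ : Equiv.Perm (Fin d)) : ℤ :=
  ((len ρ₁ + len ρ₂ + len ρ₃ : ℤ) - len (ρ₁ * ρ₂ * ρ₃)) / 2

theorem defect_add_defect_le_two_genus (d : ℕ) (π₁ π₂ : Equiv.Perm (Fin d)) :
    defect π₁ + defect (π₂⁻¹ * finRotate d) ≤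
      2 * genus π₁ (π₁⁻¹ * π₂) (π₂⁻¹ * finRotate d) := by
  match d with
  | 0 =>
    have h1 : ∀ σ : Equiv.Perm (Fin 0), σ = 1 := fun σ => Subsingleton.elim _ _
    rw [h1 π₁, h1 π₂, h1 (finRotate 0)]
    simp only [defect, genus, len, cyc_one, aex, one_mul, mul_one, inv_one]
    norm_num
  | Nat.succ m =>
    set γ := finRotate (m + 1) with hγ
    have hprod : π₁ * (π₁⁻¹ * π₂) * (π₂⁻¹ * γ) = γ := by group
    have h1 : aex π₁ + aex (π₁⁻¹ * γ) = m + 2 := aex_inv_rotate π₁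
    have h2 : aex (π₂⁻¹ * γ) ≤ aex (π₁⁻¹ * γ) + len (π₂⁻¹ * π₁) := by
      have := aex_mul_le (π₂⁻¹ * π₁) (π₁⁻¹ * γ)
      have heq : (π₂⁻¹ * π₁) * (π₁⁻¹ * γ) = π₂⁻¹ * γ := by group
      rwa [heq] at this
    have h3 : len (π₂⁻¹ * π₁) = len (π₁⁻¹ * π₂) := by
      have : π₂⁻¹ * π₁ = (π₁⁻¹ * π₂)⁻¹ := by group
      rw [this, len_inv]
    have hcγ : cyc γ = 1 := cyc_rotate
    have hlγ : len γ = m := by unfold len; omega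
    -- parity
    have hsign : (-1 : ℤˣ) ^ (len π₁ + len (π₁⁻¹ * π₂) + len (π₂⁻¹ * γ))
        = (-1 : ℤˣ) ^ (len γ) := by
      rw [pow_add, pow_add, ← sign_eq_pow_len, ← sign_eq_pow_len, ← sign_eq_pow_len,
        ← sign_eq_pow_len, ← map_mul, ← map_mul, hprod]
    have hpar := neg_one_pow_mod _ _ hsign
    rw [hlγ] at hpar
    -- arithmetic
    have hc1 : cyc π₁ ≤ m + 1 := cyc_le π₁
    have hcB : cyc (π₂⁻¹ * γ) ≤ m + 1 := cyc_le (π₂⁻¹ * γ)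
    have hl1 : len π₁ = m + 1 - cyc π₁ := rfl
    have hlB : len (π₂⁻¹ * γ) = m + 1 - cyc (π₂⁻¹ * γ) := rfl
    unfold defect genus
    rw [hprod, hlγ]
    have hdvd : (2 : ℤ) ∣ ((len π₁ + len (π₁⁻¹ * π₂) + len (π₂⁻¹ * γ) : ℤ) - m) := by
      omega
    rw [Int.mul_ediv_cancel' hdvd]
    omega
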